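/- arXiv:2103.11724 — 4 statements merged into one kernel-verified Lean document; each statement's English description precedes it below -/
import Mathlib

section
/- For any measurable f : ℝ² → ℝ with 0 ≤ f ≤ 1, ‖f‖_{L¹} = π, and ∫ |x|² f dx < ∞, one has ∫_{ℝ²} |x|² f(x) dx ≥ ∫_{D} |x|² dx = π/2. -/
open MeasureTheory

noncomputable abbrev E2 : Type := EuclideanSpace ℝ (Fin 2)

lemma volume_ball_E2 : (volume (Metric.ball (0 : E2) 1)).toReal = Real.pi := by
  rw [EuclideanSpace.volume_ball]
  simp only [Fintype.card_fin]
  rw [show ((2:ℕ):ℝ)/2 + 1 = 2 by norm_num, Real.Gamma_two,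
    Real.sq_sqrt Real.pi_pos.le]
  simp [ENNReal.toReal_mul, ENNReal.toReal_ofReal Real.pi_pos.le, div_one]

lemma ball_integral_E2 :
    ∫ x in Metric.ball (0 : E2) 1, ‖x‖ ^ 2 = Real.pi / 2 := by
  have hdim : Module.finrank ℝ E2 = 2 := finrank_euclideanSpace_fin
  set g : ℝ → ℝ := (Set.Ioo (0:ℝ) 1).indicator (fun y => y ^ 2) with hg
  have key : ∀ x : E2, (Metric.ball (0 : E2) 1).indicator (fun x => ‖x‖ ^ 2) x = g ‖x‖ := by
    intro x
    rcases eq_or_ne x 0 with rfl | hx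
    · simp [hg, Set.indicator_apply]
    · have hpos : 0 < ‖x‖ := norm_pos_iff.mpr hx
      by_cases h : ‖x‖ < 1
      · rw [Set.indicator_of_mem (by simpa [Metric.mem_ball] using h),
          hg, Set.indicator_of_mem (Set.mem_Ioo.mpr ⟨hpos, h⟩)]
      · rw [Set.indicator_of_notMem (by simpa [Metric.mem_ball] using h),
          hg, Set.indicator_of_notMem (fun hm => h hm.2)]
  rw [← integral_indicator measurableSet_ball]
  calc ∫ x : E2, (Metric.ball (0 : E2) 1).indicator (fun x => ‖x‖ ^ 2) x
      = ∫ x : E2, g ‖x‖ := by simp_rw [key]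
    _ = Module.finrank ℝ E2 • (volume (Metric.ball (0:E2) 1)).toReal •
          ∫ y in Set.Ioi (0:ℝ), y ^ (Module.finrank ℝ E2 - 1) • g y :=
        integral_fun_norm_addHaar volume g
    _ = Real.pi / 2 := by
        rw [hdim, volume_ball_E2]
        have : ∫ y in Set.Ioi (0:ℝ), y ^ (2 - 1) • g y
            = ∫ y in (0:ℝ)..1, y ^ 3 := by
          rw [intervalIntegral.integral_of_le zero_le_one, integral_Ioc_eq_integral_Ioo,
            ← integral_indicator measurableSet_Ioo]
          rw [← integral_indicator measurableSet_Ioi]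
          congr 1
          ext y
          by_cases hy : y ∈ Set.Ioo (0:ℝ) 1
          · rw [Set.indicator_of_mem hy, Set.indicator_of_mem (Set.mem_Ioi.mpr hy.1),
              hg, Set.indicator_of_mem hy, smul_eq_mul]
            ring
          · rw [Set.indicator_of_notMem hy]
            by_cases hy' : y ∈ Set.Ioi (0:ℝ)
            · rw [Set.indicator_of_mem hy', hg, Set.indicator_of_notMem hy, smul_zero]
            · rw [Set.indicator_of_notMem hy']
        rw [this, integral_pow]
        simp only [nsmul_eq_mul, smul_eq_mul]
        norm_num
        ring

/-- the angular impulse of any `0 ≤ f ≤ 1` with mass `π` is at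
least `π/2 = ∫_D |x|² dx`. -/
theorem impulse_lower_bound
    (f : E2 → ℝ) (hmeas : Measurable f)
    (hbound : ∀ᵐ x : E2, 0 ≤ f x ∧ f x ≤ 1)
    (hint : Integrable f)
    (hmass : ∫ x : E2, f x = Real.pi)
    (hJ : Integrable (fun x : E2 => ‖x‖ ^ 2 * f x)) :
    Real.pi / 2 ≤ ∫ x : E2, ‖x‖ ^ 2 * f x := by
  set D : Set E2 := Metric.ball 0 1 with hD
  set g : E2 → ℝ := D.indicator 1 with hg
  have hDmeas : MeasurableSet D := measurableSet_ball
  have hDvol : volume D ≠ ⊤ := by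
    refine (lt_of_le_of_lt (measure_mono Metric.ball_subset_closedBall) ?_).ne
    exact (isCompact_closedBall 0 1).measure_lt_top
  -- integrability facts
  have hgint : Integrable g := by
    rw [hg, integrable_indicator_iff hDmeas]
    exact (integrableOn_const_iff).mpr (Or.inr hDvol.lt_top)
  have hng : Integrable (fun x : E2 => ‖x‖ ^ 2 * g x) := by
    have : (fun x : E2 => ‖x‖ ^ 2 * g x) = D.indicator (fun x => ‖x‖ ^ 2) := by
      ext x
      by_cases hx : x ∈ D
      · simp [hg, Set.indicator_of_mem hx]
      · simp [hg, Set.indicator_of_notMem hx]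
    rw [this, integrable_indicator_iff hDmeas]
    refine Integrable.mono' (g := fun _ : E2 => (1:ℝ)) ((integrableOn_const_iff).mpr (Or.inr hDvol.lt_top))
      ((continuous_norm.pow 2).aestronglyMeasurable.restrict) ?_
    filter_upwards [ae_restrict_mem hDmeas] with x hx
    have : ‖x‖ < 1 := by simpa [hD, Metric.mem_ball] using hx
    have h0 : (0:ℝ) ≤ ‖x‖ := norm_nonneg x
    rw [Real.norm_of_nonneg (by positivity)]
    nlinarith
  -- integral values
  have hgmass : ∫ x : E2, g x = Real.pi := by
    rw [hg, integral_indicator hDmeas]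
    simp [hD, volume_ball_E2]
    exact volume_ball_E2
  have hgJ : ∫ x : E2, ‖x‖ ^ 2 * g x = Real.pi / 2 := by
    rw [← ball_integral_E2, ← integral_indicator hDmeas]
    congr 1
    ext x
    by_cases hx : x ∈ D
    · simp [hg, Set.indicator_of_mem hx]
    · simp [hg, Set.indicator_of_notMem hx]
  -- main inequality: ∫ (‖x‖²-1)(f-g) ≥ 0
  have hh : Integrable (fun x : E2 => (‖x‖ ^ 2 - 1) * (f x - g x)) := by
    have : (fun x : E2 => (‖x‖ ^ 2 - 1) * (f x - g x))
        = fun x => ‖x‖ ^ 2 * f x - ‖x‖ ^ 2 * g x - f x + g x := by ext x; ring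
    rw [this]
    exact ((hJ.sub hng).sub hint).add hgint
  have hpos : 0 ≤ ∫ x : E2, (‖x‖ ^ 2 - 1) * (f x - g x) := by
    refine integral_nonneg_of_ae ?_
    filter_upwards [hbound] with x hx
    simp only [Pi.zero_apply]
    by_cases hxD : x ∈ D
    · have h1 : ‖x‖ < 1 := by simpa [hD, Metric.mem_ball] using hxD
      have hgx : g x = 1 := by simp [hg, Set.indicator_of_mem hxD]
      have h0 : (0:ℝ) ≤ ‖x‖ := norm_nonneg x
      rw [hgx]
      exact mul_nonneg_of_nonpos_of_nonpos (by nlinarith) (by linarith [hx.2])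
    · have h1 : 1 ≤ ‖x‖ := by
        by_contra h
        exact hxD (by simpa [hD, Metric.mem_ball] using lt_of_not_ge h)
      have hgx : g x = 0 := by simp [hg, Set.indicator_of_notMem hxD]
      rw [hgx]
      exact mul_nonneg (by nlinarith) (by simpa using hx.1)
  have hsplit : ∫ x : E2, (‖x‖ ^ 2 - 1) * (f x - g x)
      = (∫ x : E2, ‖x‖ ^ 2 * f x) - Real.pi / 2 := by
    have : (fun x : E2 => (‖x‖ ^ 2 - 1) * (f x - g x))
        = fun x => (‖x‖ ^ 2 * f x - ‖x‖ ^ 2 * g x) - (f x - g x) := by ext x; ring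
    have e1 : (∫ x : E2, ((‖x‖ ^ 2 * f x - ‖x‖ ^ 2 * g x) - (f x - g x)))
        = (∫ x : E2, (‖x‖ ^ 2 * f x - ‖x‖ ^ 2 * g x)) - ∫ x : E2, (f x - g x) :=
      integral_sub (hJ.sub hng) (hint.sub hgint)
    have e2 : (∫ x : E2, (‖x‖ ^ 2 * f x - ‖x‖ ^ 2 * g x))
        = (∫ x : E2, ‖x‖ ^ 2 * f x) - ∫ x : E2, ‖x‖ ^ 2 * g x := integral_sub hJ hng
    have e3 : (∫ x : E2, (f x - g x)) = (∫ x : E2, f x) - ∫ x : E2, g x :=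
      integral_sub hint hgint
    rw [this, e1, e2, e3, hgJ, hmass, hgmass]
    ring
  linarith [hpos, hsplit.symm ▸ hpos, hsplit ▸ hpos]
end

section
/- Let 0 ≤ s₂ ≤ s₁ and 0 < k/n ≤ 1. Define c = √((1 - k/n) s₂² + (k/n) s₁²). Then the function h = (k/n)·1_{{s₂ ≤ |x| < s₁}} and the function h' = 1_{{s₂ ≤ |x| < c}} have equal L¹ norms, and J(h) - J(h') = (πk/(2n))(1 - k/n)(s₁² - s₂²)² ≥ 0, where J(f) = ∫_{ℝ²} |x|² f(x) dx. -/
open MeasureTheory Metric Set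

lemma vol_unit : (volume (ball (0:E2) 1)).toReal = Real.pi := by
  rw [EuclideanSpace.volume_ball]
  simp only [Fintype.card_fin]
  rw [show ((2:ℕ):ℝ)/2 + 1 = 2 by norm_num, Real.Gamma_two]
  rw [Real.sq_sqrt Real.pi_pos.le]
  simp [ENNReal.toReal_ofReal Real.pi_pos.le]

lemma dim_E2 : Module.finrank ℝ E2 = 2 := by
  rw [finrank_euclideanSpace]; simp

lemma ann_int (a b : ℝ) (ha : 0 ≤ a) (hab : a ≤ b) (m : ℕ) :
    ∫ x : E2, ‖x‖ ^ m * ({x : E2 | a ≤ ‖x‖ ∧ ‖x‖ < b}.indicator (fun _ => (1:ℝ)) x)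
      = 2 * Real.pi * ((b ^ (m + 2) - a ^ (m + 2)) / (m + 2)) := by
  have heq : (fun x : E2 => ‖x‖ ^ m * ({x : E2 | a ≤ ‖x‖ ∧ ‖x‖ < b}.indicator (fun _ => (1:ℝ)) x))
      = fun x : E2 => (fun y : ℝ => y ^ m * (Set.Ico a b).indicator (fun _ => (1:ℝ)) y) ‖x‖ := by
    funext x
    by_cases hx : a ≤ ‖x‖ ∧ ‖x‖ < b
    · simp [Set.indicator_apply, hx, Set.mem_Ico]
    · simp [Set.indicator_apply, hx, Set.mem_Ico]
  rw [heq, MeasureTheory.integral_fun_norm_addHaar volume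
    (fun y : ℝ => y ^ m * (Set.Ico a b).indicator (fun _ => (1:ℝ)) y)]
  rw [dim_E2, measureReal_def, vol_unit]
  have h1 : ∫ y in Set.Ioi (0:ℝ), y ^ (2 - 1) • (y ^ m * (Set.Ico a b).indicator (fun _ => (1:ℝ)) y)
      = (b ^ (m + 2) - a ^ (m + 2)) / (m + 2) := by
    have : (fun y : ℝ => y ^ (2-1) • (y ^ m * (Set.Ico a b).indicator (fun _ => (1:ℝ)) y))
        = fun y => (Set.Ico a b).indicator (fun y => y ^ (m+1)) y := by
      funext y
      by_cases hy : y ∈ Set.Ico a b <;> simp [Set.indicator_apply, hy] <;> ring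
    rw [this, MeasureTheory.setIntegral_indicator measurableSet_Ico]
    have hset : (Set.Ioi (0:ℝ) ∩ Set.Ico a b : Set ℝ) =ᵐ[volume] (Set.Ioc a b : Set ℝ) := by
      rw [Filter.eventuallyEq_set]
      have h0 : ∀ᵐ y : ℝ ∂volume, y ≠ 0 ∧ y ≠ a ∧ y ≠ b := by
        rw [MeasureTheory.ae_iff]
        refine measure_mono_null (fun y hy => ?_) (t := ({0, a, b} : Set ℝ)) ?_
        · simp only [Set.mem_setOf_eq] at hy
          simp only [Set.mem_insert_iff, Set.mem_singleton_iff]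
          tauto
        · exact (Set.toFinite _).measure_zero volume
      filter_upwards [h0] with y hy
      obtain ⟨hy0, hya, hyb⟩ := hy
      simp only [Set.mem_inter_iff, Set.mem_Ioi, Set.mem_Ico, Set.mem_Ioc]
      constructor
      · rintro ⟨h1, h2, h3⟩
        exact ⟨lt_of_le_of_ne h2 (Ne.symm hya), h3.le⟩
      · rintro ⟨h1, h2⟩
        exact ⟨lt_of_le_of_lt ha h1, h1.le, lt_of_le_of_ne h2 hyb⟩
    rw [MeasureTheory.setIntegral_congr_set hset,
      ← intervalIntegral.integral_of_le hab, integral_pow]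
    push_cast
    ring
  rw [h1]
  simp only [smul_eq_mul, nsmul_eq_mul]
  push_cast
  ring

/-- replacing `(k/n)·1_{{s₂ ≤ |x| < s₁}}` by the indicator of a
thinner annulus of the same mass and inner radius decreases the impulse by the
explicit amount `(πk/(2n))(1 - k/n)(s₁² - s₂²)²`. -/
theorem annulus_flattening
    (s₁ s₂ k n : ℝ) (hs₂ : 0 ≤ s₂) (hs : s₂ ≤ s₁)
    (hkn0 : 0 < k / n) (hkn1 : k / n ≤ 1)
    (c : ℝ) (hc : c = Real.sqrt ((1 - k / n) * s₂ ^ 2 + (k / n) * s₁ ^ 2))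
    (h h' : E2 → ℝ)
    (hh : h = fun x => (k / n) *
      ({x : E2 | s₂ ≤ ‖x‖ ∧ ‖x‖ < s₁}.indicator (fun _ => (1 : ℝ)) x))
    (hh' : h' = ({x : E2 | s₂ ≤ ‖x‖ ∧ ‖x‖ < c}.indicator (fun _ => (1 : ℝ)))) :
    (∫ x : E2, h x) = ∫ x : E2, h' x ∧
    (∫ x : E2, ‖x‖ ^ 2 * h x) - (∫ x : E2, ‖x‖ ^ 2 * h' x)
      = (Real.pi * k / (2 * n)) * (1 - k / n) * (s₁ ^ 2 - s₂ ^ 2) ^ 2 ∧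
    0 ≤ (∫ x : E2, ‖x‖ ^ 2 * h x) - (∫ x : E2, ‖x‖ ^ 2 * h' x) := by
  have hn : n ≠ 0 := by rintro rfl; simp at hkn0
  have hexp : 0 ≤ (1 - k / n) * s₂ ^ 2 + (k / n) * s₁ ^ 2 := by
    nlinarith [sq_nonneg s₂, sq_nonneg s₁]
  have hc2 : c ^ 2 = (1 - k / n) * s₂ ^ 2 + (k / n) * s₁ ^ 2 := by
    rw [hc]; exact Real.sq_sqrt hexp
  have hcs : s₂ ≤ c := by
    rw [hc, show s₂ = Real.sqrt (s₂ ^ 2) from (Real.sqrt_sq hs₂).symm]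
    apply Real.sqrt_le_sqrt
    rw [Real.sqrt_sq hs₂]
    have hss : s₂ ^ 2 ≤ s₁ ^ 2 := by nlinarith
    nlinarith [mul_nonneg hkn0.le (sub_nonneg.mpr hss)]
  have A1 := ann_int s₂ s₁ hs₂ hs 0
  have A2 := ann_int s₂ s₁ hs₂ hs 2
  have B1 := ann_int s₂ c hs₂ hcs 0
  have B2 := ann_int s₂ c hs₂ hcs 2
  simp only [pow_zero, one_mul, Nat.cast_ofNat, Nat.cast_zero] at A1 A2 B1 B2
  norm_num at A1 A2 B1 B2
  have Ih : (∫ x : E2, h x) = (k / n) * ∫ x : E2,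
      ({x : E2 | s₂ ≤ ‖x‖ ∧ ‖x‖ < s₁}.indicator (fun _ => (1 : ℝ)) x) := by
    rw [hh]; exact integral_const_mul _ _
  have Ih2 : (∫ x : E2, ‖x‖ ^ 2 * h x) = (k / n) * ∫ x : E2, ‖x‖ ^ 2 *
      ({x : E2 | s₂ ≤ ‖x‖ ∧ ‖x‖ < s₁}.indicator (fun _ => (1 : ℝ)) x) := by
    rw [hh, ← integral_const_mul]
    congr 1; funext x; ring
  have hc4 : c ^ 4 = ((1 - k / n) * s₂ ^ 2 + (k / n) * s₁ ^ 2) ^ 2 := by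
    rw [show c ^ 4 = (c ^ 2) ^ 2 by ring, hc2]
  have hpi : Real.pi * k / (2 * n) = Real.pi * (k / n) / 2 := by
    rw [div_eq_div_iff (by positivity) (by norm_num : (2:ℝ) ≠ 0)]
    field_simp
  have key : (∫ x : E2, ‖x‖ ^ 2 * h x) - (∫ x : E2, ‖x‖ ^ 2 * h' x)
      = (Real.pi * k / (2 * n)) * (1 - k / n) * (s₁ ^ 2 - s₂ ^ 2) ^ 2 := by
    rw [Ih2, A2, hh', B2, hc4, hpi]; ring
  refine ⟨?_, key, ?_⟩
  · rw [Ih, A1, hh', B1, hc2]; ring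
  · rw [key, hpi]
    have h1 : 0 ≤ 1 - k / n := by linarith
    positivity
end

section
/- Let A ⊂ ℝ² be measurable with |A| = π s² for some s ≥ 0, and let B_s be the disk of radius s centered at the origin. Then ∫_{A \ B_s} |x|² dx − ∫_{B_s \ A} |x|² dx ≥ β²/π, where β = |A \ B_s| = |B_s \ A| = (1/2)|A △ B_s|. -/
open MeasureTheory

open Real Set in
lemma vol_ball2 (r : ℝ) (hr : 0 ≤ r) :
    volume (Metric.ball (0 : E2) r) = ENNReal.ofReal (π * r ^ 2) := by
  rw [EuclideanSpace.volume_ball]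
  simp only [Fintype.card_fin]
  rw [show ((2:ℕ):ℝ)/2 + 1 = 2 by norm_num, Real.Gamma_two]
  rw [sq_sqrt pi_nonneg, ← ENNReal.ofReal_pow hr, ← ENNReal.ofReal_mul (by positivity)]
  ring_nf

open Real Set in
lemma int_ball2 (r : ℝ) (hr : 0 ≤ r) :
    ∫ x in Metric.ball (0 : E2) r, ‖x‖ ^ 2 = π * r ^ 4 / 2 := by
  have key := MeasureTheory.integral_fun_norm_addHaar (volume : Measure E2)
    (Set.indicator (Set.Ico 0 r) (fun y => y ^ 2))
  have h1 : (∫ x : E2, Set.indicator (Set.Ico 0 r) (fun y => y ^ 2) ‖x‖)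
      = ∫ x in Metric.ball (0 : E2) r, ‖x‖ ^ 2 := by
    rw [← integral_indicator measurableSet_ball]
    congr 1
    ext x
    by_cases hx : x ∈ Metric.ball (0 : E2) r
    · rw [Set.indicator_of_mem hx, Set.indicator_of_mem]
      exact ⟨norm_nonneg x, by simpa [Metric.mem_ball, dist_eq_norm] using hx⟩
    · rw [Set.indicator_of_notMem hx, Set.indicator_of_notMem]
      intro ⟨_, h2⟩
      exact hx (by simpa [Metric.mem_ball, dist_eq_norm] using h2)
  have hdim : Module.finrank ℝ E2 = 2 := by
    simp [finrank_euclideanSpace]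
  rw [h1, hdim] at key
  rw [key]
  have h2 : (∫ y in Ioi (0:ℝ), y ^ (2 - 1) • Set.indicator (Set.Ico 0 r) (fun y => y ^ 2) y)
      = ∫ y in Set.Ioo (0:ℝ) r, y ^ 3 := by
    rw [← integral_indicator measurableSet_Ioo, ← integral_indicator measurableSet_Ioi]
    congr 1
    funext y
    rcases lt_or_ge 0 y with hy0 | hy0
    · rcases lt_or_ge y r with hyr | hyr
      · rw [Set.indicator_of_mem (Set.mem_Ioi.mpr hy0),
            Set.indicator_of_mem (Set.mem_Ico.mpr ⟨hy0.le, hyr⟩),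
            Set.indicator_of_mem (Set.mem_Ioo.mpr ⟨hy0, hyr⟩)]
        simp; ring
      · rw [Set.indicator_of_mem (Set.mem_Ioi.mpr hy0),
            Set.indicator_of_notMem (show y ∉ Set.Ico 0 r from fun h => absurd h.2 (not_lt.mpr hyr)),
            Set.indicator_of_notMem (show y ∉ Set.Ioo 0 r from fun h => absurd h.2 (not_lt.mpr hyr))]
        simp
    · rw [Set.indicator_of_notMem (show y ∉ Set.Ioi 0 from fun h => absurd h (not_lt.mpr hy0)),
          Set.indicator_of_notMem (show y ∉ Set.Ioo 0 r from fun h => absurd h.1 (not_lt.mpr hy0))]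
  rw [h2]
  have h3 : ∫ y in Set.Ioo (0:ℝ) r, y ^ 3 = r ^ 4 / 4 := by
    rw [(MeasureTheory.integral_Ioc_eq_integral_Ioo (f := fun y => y^3) (x:=(0:ℝ)) (y:=r)).symm,
      ← intervalIntegral.integral_of_le hr, integral_pow]
    norm_num
  rw [h3, measureReal_def, vol_ball2 1 zero_le_one]
  rw [ENNReal.toReal_ofReal (by positivity)]
  simp
  ring

lemma diff_meas_eq {S T : Set E2} (hS : MeasurableSet S) (hT : MeasurableSet T)
    (hSfin : volume S ≠ ⊤) (heq : volume S = volume T) :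
    volume (S \ T) = volume (T \ S) := by
  have h1 : volume (S ∩ T) + volume (S \ T) = volume S := measure_inter_add_diff S hT
  have h2 : volume (T ∩ S) + volume (T \ S) = volume T := measure_inter_add_diff T hS
  rw [Set.inter_comm] at h2
  have hfin : volume (S ∩ T) ≠ ⊤ := fun h => hSfin (top_le_iff.mp (h ▸ measure_mono Set.inter_subset_left : ⊤ ≤ volume S))
  have := h1.trans (heq.trans h2.symm)
  exact (ENNReal.add_right_inj hfin).mp this

lemma bathtub (S T : Set E2) (hS : MeasurableSet S) (hT : MeasurableSet T)
    (hSfin : volume S ≠ ⊤) (heq : volume S = volume T) (c : ℝ)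
    (h1 : ∀ x ∈ S \ T, c ≤ ‖x‖ ^ 2)
    (h2 : ∀ x ∈ T \ S, ‖x‖ ^ 2 ≤ c)
    (hintS : IntegrableOn (fun x : E2 => ‖x‖ ^ 2) S)
    (hintT : IntegrableOn (fun x : E2 => ‖x‖ ^ 2) T) :
    ∫ x in T, ‖x‖ ^ 2 ≤ ∫ x in S, ‖x‖ ^ 2 := by
  have hdm : volume (S \ T) = volume (T \ S) := diff_meas_eq hS hT hSfin heq
  have hSd : volume (S \ T) ≠ ⊤ := fun h => hSfin (top_le_iff.mp (h ▸ measure_mono Set.diff_subset : ⊤ ≤ volume S))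
  have hTd : volume (T \ S) ≠ ⊤ := hdm ▸ hSd
  have eS : ∫ x in S ∩ T, ‖x‖ ^ 2 ∂volume + ∫ x in S \ T, ‖x‖ ^ 2 ∂volume = ∫ x in S, ‖x‖ ^ 2 ∂volume :=
    integral_inter_add_diff hT hintS
  have eT : ∫ x in T ∩ S, ‖x‖ ^ 2 ∂volume + ∫ x in T \ S, ‖x‖ ^ 2 ∂volume = ∫ x in T, ‖x‖ ^ 2 ∂volume :=
    integral_inter_add_diff hS hintT
  rw [Set.inter_comm] at eT
  rw [← eS, ← eT]
  refine add_le_add le_rfl ?_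
  have hub : ∫ x in T \ S, ‖x‖ ^ 2 ≤ c * (volume (T \ S)).toReal := by
    have := norm_setIntegral_le_of_norm_le_const (μ := volume) (s := T \ S)
      (f := fun x : E2 => ‖x‖ ^ 2) (C := c) hTd.lt_top
      (fun x hx => by rw [Real.norm_eq_abs, abs_of_nonneg (by positivity)]; exact h2 x hx)
    exact le_trans (le_abs_self _) this
  have hlb : c * (volume (S \ T)).toReal ≤ ∫ x in S \ T, ‖x‖ ^ 2 :=
    setIntegral_ge_of_const_le_real (hS.diff hT) hSd h1 (hintS.mono_set Set.diff_subset)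
  calc ∫ x in T \ S, ‖x‖ ^ 2 ≤ c * (volume (T \ S)).toReal := hub
    _ = c * (volume (S \ T)).toReal := by rw [hdm]
    _ ≤ ∫ x in S \ T, ‖x‖ ^ 2 := hlb

lemma int_on_ball (R : ℝ) :
    IntegrableOn (fun x : E2 => ‖x‖ ^ 2) (Metric.ball (0 : E2) R) := by
  apply Measure.integrableOn_of_bounded (M := R ^ 2) measure_ball_lt_top.ne
    ((continuous_norm.pow 2).aestronglyMeasurable)
  filter_upwards [ae_restrict_mem measurableSet_ball] with x hx
  show ‖‖x‖ ^ 2‖ ≤ R ^ 2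
  rw [Real.norm_eq_abs, abs_of_nonneg (by positivity)]
  have hx' : ‖x‖ < R := by simpa [mem_ball_zero_iff] using hx
  exact le_of_lt (by nlinarith [norm_nonneg x])

/-- if `|A| = π s²` then the impulse excess of `A` over the disk
`B_s` is at least `β²/π` with `β = |A \ B_s| = |B_s \ A|`. -/
theorem impulse_excess_lower_bound
    (A : Set E2) (hA : MeasurableSet A) (s : ℝ) (hs : 0 ≤ s)
    (hvol : volume A = ENNReal.ofReal (Real.pi * s ^ 2))
    (hint : IntegrableOn (fun x : E2 => ‖x‖ ^ 2) (A \ Metric.ball (0 : E2) s))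
    (β : ℝ) (hβ : β = (volume (A \ Metric.ball (0 : E2) s)).toReal) :
    volume (A \ Metric.ball (0 : E2) s) = volume (Metric.ball (0 : E2) s \ A) ∧
    β = (volume (symmDiff A (Metric.ball (0 : E2) s))).toReal / 2 ∧
    β ^ 2 / Real.pi ≤
      (∫ x in A \ Metric.ball (0 : E2) s, ‖x‖ ^ 2)
        - ∫ x in Metric.ball (0 : E2) s \ A, ‖x‖ ^ 2 := by
  have hπ : (0:ℝ) < Real.pi := Real.pi_pos
  set B := Metric.ball (0 : E2) s with hBdef
  have hB : MeasurableSet B := measurableSet_ball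
  have hvolB : volume B = ENNReal.ofReal (Real.pi * s ^ 2) := vol_ball2 s hs
  have hAfin : volume A ≠ ⊤ := by rw [hvol]; exact ENNReal.ofReal_ne_top
  have claim1 : volume (A \ B) = volume (B \ A) :=
    diff_meas_eq hA hB hAfin (hvol.trans hvolB.symm)
  -- finiteness of the pieces
  have hABfin : volume (A \ B) ≠ ⊤ :=
    fun h => hAfin (top_le_iff.mp (h ▸ measure_mono Set.diff_subset : ⊤ ≤ volume A))
  have hβ0 : 0 ≤ β := hβ ▸ ENNReal.toReal_nonneg
  have hβeq : volume (A \ B) = ENNReal.ofReal β := by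
    rw [hβ, ENNReal.ofReal_toReal hABfin]
  -- claim 2
  have claim2 : β = (volume (symmDiff A B)).toReal / 2 := by
    have hsd : symmDiff A B = (A \ B) ∪ (B \ A) := by
      rw [Set.symmDiff_def]
    rw [hsd, measure_union (disjoint_sdiff_sdiff) (hB.diff hA), ← claim1,
      ENNReal.toReal_add hABfin hABfin]
    rw [hβ]
    try ring
  refine ⟨claim1, claim2, ?_⟩
  -- bound on β
  have hβle : β ≤ Real.pi * s ^ 2 := by
    have h1 : volume (A \ B) ≤ volume B := claim1 ▸ measure_mono Set.diff_subset
    have := ENNReal.toReal_mono (hvolB ▸ ENNReal.ofReal_ne_top) h1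
    rwa [hvolB, ENNReal.toReal_ofReal (by positivity), ← hβ] at this
  have hβπ : β / Real.pi ≤ s ^ 2 := by
    rw [div_le_iff₀ hπ]; nlinarith
  set r := Real.sqrt (s ^ 2 + β / Real.pi) with hrdef
  set ρ := Real.sqrt (s ^ 2 - β / Real.pi) with hρdef
  have hr0 : 0 ≤ r := Real.sqrt_nonneg _
  have hρ0 : 0 ≤ ρ := Real.sqrt_nonneg _
  have hr2 : r ^ 2 = s ^ 2 + β / Real.pi := Real.sq_sqrt (by have := div_nonneg hβ0 hπ.le; linarith)
  have hρ2 : ρ ^ 2 = s ^ 2 - β / Real.pi := Real.sq_sqrt (by linarith)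
  have hsr : s ≤ r := by
    rw [show s = Real.sqrt (s ^ 2) from (Real.sqrt_sq hs).symm]
    exact Real.sqrt_le_sqrt (by have := div_nonneg hβ0 hπ.le; linarith)
  have hρs : ρ ≤ s := by
    rw [show s = Real.sqrt (s ^ 2) from (Real.sqrt_sq hs).symm]
    exact Real.sqrt_le_sqrt (by linarith [div_nonneg hβ0 hπ.le])
  set O := Metric.ball (0 : E2) r \ B with hOdef
  set I := B \ Metric.ball (0 : E2) ρ with hIdef
  -- volumes of annuli
  have hvolr : volume (Metric.ball (0 : E2) r) = ENNReal.ofReal (Real.pi * r ^ 2) := vol_ball2 r hr0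
  have hvolρ : volume (Metric.ball (0 : E2) ρ) = ENNReal.ofReal (Real.pi * ρ ^ 2) := vol_ball2 ρ hρ0
  have hvolO : volume O = ENNReal.ofReal β := by
    rw [hOdef, measure_diff (Metric.ball_subset_ball hsr) hB.nullMeasurableSet
      (hvolB ▸ ENNReal.ofReal_ne_top), hvolr, hvolB, ← ENNReal.ofReal_sub _ (by positivity)]
    congr 1
    rw [hr2]; field_simp; ring
  have hvolI : volume I = ENNReal.ofReal β := by
    rw [hIdef, measure_diff (Metric.ball_subset_ball hρs) measurableSet_ball.nullMeasurableSet
      (hvolρ ▸ ENNReal.ofReal_ne_top), hvolB, hvolρ, ← ENNReal.ofReal_sub _ (by positivity)]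
    congr 1
    rw [hρ2]; field_simp; ring
  -- integrals over annuli
  have hintr := int_on_ball r
  have hintρ := int_on_ball ρ
  have hints := int_on_ball s
  have hintO : IntegrableOn (fun x : E2 => ‖x‖ ^ 2) O := hintr.mono_set Set.diff_subset
  have hintI : IntegrableOn (fun x : E2 => ‖x‖ ^ 2) I := hints.mono_set Set.diff_subset
  have hintBA : IntegrableOn (fun x : E2 => ‖x‖ ^ 2) (B \ A) := hints.mono_set Set.diff_subset
  have hiO : ∫ x in O, ‖x‖ ^ 2 = Real.pi * r ^ 4 / 2 - Real.pi * s ^ 4 / 2 := by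
    have := integral_inter_add_diff (s := Metric.ball (0 : E2) r) (t := B)
      (f := fun x : E2 => ‖x‖ ^ 2) (μ := volume) hB hintr
    rw [Set.inter_eq_self_of_subset_right (Metric.ball_subset_ball hsr)] at this
    have h1 := int_ball2 r hr0
    have h2 := int_ball2 s hs
    rw [hOdef]
    linarith [this, h1, h2]
  have hiI : ∫ x in I, ‖x‖ ^ 2 = Real.pi * s ^ 4 / 2 - Real.pi * ρ ^ 4 / 2 := by
    have := integral_inter_add_diff (s := B) (t := Metric.ball (0 : E2) ρ)
      (f := fun x : E2 => ‖x‖ ^ 2) (μ := volume) measurableSet_ball hints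
    rw [Set.inter_eq_self_of_subset_right (Metric.ball_subset_ball hρs)] at this
    have h1 := int_ball2 s hs
    have h2 := int_ball2 ρ hρ0
    rw [hIdef]
    linarith [this, h1, h2]
  -- comparison inequalities
  have e1 : ∫ x in O, ‖x‖ ^ 2 ≤ ∫ x in A \ B, ‖x‖ ^ 2 := by
    apply bathtub (A \ B) O (hA.diff hB) (measurableSet_ball.diff hB) hABfin
      (by rw [hβeq, hvolO]) (r ^ 2)
    · rintro x ⟨⟨hxA, hxB⟩, hxO⟩
      have hxr : r ≤ ‖x‖ := by
        by_contra h
        exact hxO ⟨mem_ball_zero_iff.mpr (lt_of_not_ge h), hxB⟩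
      nlinarith
    · rintro x ⟨⟨hxr, _⟩, _⟩
      have : ‖x‖ < r := mem_ball_zero_iff.mp hxr
      nlinarith [norm_nonneg x]
    · exact hint
    · exact hintO
  have e2 : ∫ x in B \ A, ‖x‖ ^ 2 ≤ ∫ x in I, ‖x‖ ^ 2 := by
    apply bathtub I (B \ A) (hB.diff measurableSet_ball) (hB.diff hA)
      (hvolI ▸ ENNReal.ofReal_ne_top) (by rw [hvolI, ← claim1, hβeq]) (ρ ^ 2)
    · rintro x ⟨⟨_, hxρ⟩, _⟩
      have hxr : ρ ≤ ‖x‖ := by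
        by_contra h
        exact hxρ (mem_ball_zero_iff.mpr (lt_of_not_ge h))
      nlinarith
    · rintro x ⟨⟨hxB, hxA⟩, hxI⟩
      have hxρ : x ∈ Metric.ball (0 : E2) ρ := by
        by_contra h
        exact hxI ⟨hxB, h⟩
      have : ‖x‖ < ρ := mem_ball_zero_iff.mp hxρ
      nlinarith [norm_nonneg x]
    · exact hintI
    · exact hintBA
  -- final arithmetic
  have hr4 : r ^ 4 = (s ^ 2 + β / Real.pi) ^ 2 := by
    rw [show r ^ 4 = (r ^ 2) ^ 2 by ring, hr2]
  have hρ4 : ρ ^ 4 = (s ^ 2 - β / Real.pi) ^ 2 := by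
    rw [show ρ ^ 4 = (ρ ^ 2) ^ 2 by ring, hρ2]
  have harith : (Real.pi * r ^ 4 / 2 - Real.pi * s ^ 4 / 2)
      - (Real.pi * s ^ 4 / 2 - Real.pi * ρ ^ 4 / 2) = β ^ 2 / Real.pi := by
    rw [hr4, hρ4]; field_simp; ring
  linarith [e1, e2, hiO, hiI, harith]
end

section
/- Let f ∈ L^∞(ℝ²) be nonnegative with J(f) = ∫ |x|² f dx < ∞, and let f* be its symmetric-decreasing rearrangement. Then ‖f − f*‖_{L¹}² ≤ 4π ‖f‖_{L^∞} (J(f) − J(f*)). -/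
open MeasureTheory

/-- Radius of the origin-centered disk with the same measure as the
super-level set `{f > ξ}`. -/
noncomputable def levelRadius (f : E2 → ℝ) (ξ : ℝ) : ℝ :=
  Real.sqrt ((volume {y : E2 | ξ < f y}).toReal / Real.pi)

/-- Symmetric-decreasing rearrangement via the layer-cake formula:
`f*(x) = ∫₀^∞ 1_{{f > ξ}*}(x) dξ`. -/
noncomputable def rearrangement (f : E2 → ℝ) (x : E2) : ℝ :=
  ∫ ξ in Set.Ioi (0 : ℝ), if ‖x‖ < levelRadius f ξ then (1 : ℝ) else 0

open Set Metric ENNReal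


lemma meas_sq_gt (t : ℝ) : MeasurableSet {x : E2 | t < ‖x‖^2} :=
  measurableSet_lt measurable_const (measurable_norm.pow_const 2)

lemma vol_ball {r : ℝ} (hr : 0 ≤ r) :
    volume (Metric.ball (0 : E2) r) = ENNReal.ofReal (Real.pi * r ^ 2) := by
  rw [EuclideanSpace.volume_ball]
  simp only [Fintype.card_fin]
  rw [show ((2:ℕ):ℝ)/2 + 1 = 2 by norm_num, Real.Gamma_two,
    Real.sq_sqrt Real.pi_pos.le, div_one, ← ENNReal.ofReal_pow hr, ← ENNReal.ofReal_mul
    (by positivity), mul_comm]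

lemma vol_cball {r : ℝ} (hr : 0 ≤ r) :
    volume (Metric.closedBall (0 : E2) r) = ENNReal.ofReal (Real.pi * r ^ 2) := by
  rw [Measure.addHaar_closedBall_eq_addHaar_ball, vol_ball hr]

lemma lint_sq (S : Set E2) (_hS : MeasurableSet S) :
    ∫⁻ x in S, ENNReal.ofReal (‖x‖^2) = ∫⁻ t in Set.Ioi (0:ℝ), volume (S ∩ {x : E2 | t < ‖x‖^2}) := by
  rw [lintegral_eq_lintegral_meas_lt (volume.restrict S)
    (Filter.Eventually.of_forall fun x => sq_nonneg _)
    (measurable_norm.pow_const 2).aemeasurable]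
  refine lintegral_congr fun t => ?_
  rw [Measure.restrict_apply (meas_sq_gt t), Set.inter_comm]

lemma sq_gt_compl {t : ℝ} (ht : 0 ≤ t) :
    {x : E2 | t < ‖x‖^2}ᶜ = Metric.closedBall (0:E2) (Real.sqrt t) := by
  ext x
  simp only [mem_compl_iff, mem_setOf_eq, mem_closedBall, dist_zero_right, not_lt]
  exact ⟨fun h => (Real.le_sqrt (norm_nonneg x) ht).mpr h,
    fun h => (Real.le_sqrt (norm_nonneg x) ht).mp h⟩

lemma vol_sq_gt_antitone (S : Set E2) :
    Antitone (fun t : ℝ => volume (S ∩ {x : E2 | t < ‖x‖^2})) := fun t1 t2 h =>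
  measure_mono fun x hx => ⟨hx.1, lt_of_le_of_lt h hx.2⟩

lemma lint_outer {r d : ℝ} (hr : 0 ≤ r) (hd : 0 ≤ d) (S : Set E2) (hS : MeasurableSet S)
    (hdisj : ∀ x ∈ S, r ≤ ‖x‖) (hvol : volume S = ENNReal.ofReal d) :
    ENNReal.ofReal (r^2*d + d^2/(2*Real.pi)) ≤ ∫⁻ x in S, ENNReal.ofReal (‖x‖^2) := by
  have hπ := Real.pi_pos
  set b := r^2 + d/Real.pi with hbdef
  have hrb : r^2 ≤ b := le_add_of_nonneg_right (by positivity)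
  have hb0 : (0:ℝ) ≤ b := le_trans (by positivity) hrb
  set g : ℝ → ℝ := fun t => min d (d + Real.pi*r^2 - Real.pi*t) with hgdef
  have hgc : Continuous g := continuous_const.min (by fun_prop)
  have key : ∀ t ∈ Set.Ioc (0:ℝ) b,
      ENNReal.ofReal (g t) ≤ volume (S ∩ {x : E2 | t < ‖x‖^2}) := by
    intro t ht
    have ht0 : (0:ℝ) ≤ t := ht.1.le
    have hsplit : volume S ≤ volume (S ∩ {x : E2 | t < ‖x‖^2}ᶜ) + volume (S ∩ {x : E2 | t < ‖x‖^2}) := by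
      conv_lhs => rw [← Set.inter_union_compl S {x : E2 | t < ‖x‖^2}]
      rw [Set.union_comm]
      exact measure_union_le _ _
    have hbound2 : volume (S ∩ {x : E2 | t < ‖x‖^2}ᶜ) ≤ ENNReal.ofReal (Real.pi*t - Real.pi*r^2) := by
      rcases le_or_gt (r^2) t with h | h
      · have hrt : r ≤ Real.sqrt t := by
          rw [← Real.sqrt_sq hr]; exact Real.sqrt_le_sqrt h
        have hsub : S ∩ {x : E2 | t < ‖x‖^2}ᶜ ∪ Metric.ball (0:E2) r ⊆
            Metric.closedBall (0:E2) (Real.sqrt t) := by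
          rw [sq_gt_compl ht0]
          exact Set.union_subset Set.inter_subset_right
            (Metric.ball_subset_closedBall.trans (Metric.closedBall_subset_closedBall hrt))
        have hdis : Disjoint (S ∩ {x : E2 | t < ‖x‖^2}ᶜ) (Metric.ball (0:E2) r) := by
          refine Set.disjoint_left.mpr fun x hx hxb => ?_
          exact absurd (hdisj x hx.1) (not_le.mpr (by simpa using hxb))
        have h2 : volume (S ∩ {x : E2 | t < ‖x‖^2}ᶜ) + volume (Metric.ball (0:E2) r) ≤
            volume (Metric.closedBall (0:E2) (Real.sqrt t)) := by
          rw [← measure_union hdis measurableSet_ball]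
          exact measure_mono hsub
        rw [vol_ball hr, vol_cball (Real.sqrt_nonneg t), Real.sq_sqrt ht0] at h2
        rw [ENNReal.ofReal_sub _ (by positivity)]
        exact ENNReal.le_sub_of_add_le_right ENNReal.ofReal_ne_top h2
      · have hemp : S ∩ {x : E2 | t < ‖x‖^2}ᶜ = ∅ := by
          ext x
          simp only [mem_inter_iff, mem_compl_iff, mem_setOf_eq, not_lt,
            mem_empty_iff_false, iff_false, not_and]
          intro hxS hle
          have := hdisj x hxS
          nlinarith [norm_nonneg x]
        simp [hemp]
    have hg : ENNReal.ofReal (g t) = ENNReal.ofReal d - ENNReal.ofReal (Real.pi*t - Real.pi*r^2) := by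
      rcases le_total (Real.pi*t - Real.pi*r^2) 0 with h | h
      · rw [ENNReal.ofReal_of_nonpos h, tsub_zero]
        congr 1
        exact min_eq_left (by linarith)
      · rw [← ENNReal.ofReal_sub _ h]
        congr 1
        show min d (d + Real.pi*r^2 - Real.pi*t) = _
        rw [min_eq_right (by linarith)]
        ring
    rw [hg]
    exact le_trans (tsub_le_tsub hvol.ge hbound2) (tsub_le_iff_left.mpr hsplit)
  have hval : ∫ t in Set.Ioc (0:ℝ) b, g t = r^2*d + d^2/(2*Real.pi) := by
    have hii : ∀ u v : ℝ, IntervalIntegrable g volume u v := fun u v =>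
      hgc.intervalIntegrable u v
    have hadj := intervalIntegral.integral_add_adjacent_intervals (hii 0 (r^2)) (hii (r^2) b)
    have h1 : ∫ t in (0:ℝ)..(r^2), g t = d * r^2 := by
      rw [intervalIntegral.integral_congr (g := fun _ => d)
        (fun t ht => ?_), intervalIntegral.integral_const, smul_eq_mul]
      · ring
      · rw [Set.uIcc_of_le (by positivity)] at ht
        exact min_eq_left (by nlinarith [ht.1, ht.2, mul_le_mul_of_nonneg_left ht.2 hπ.le])
    have h2 : ∫ t in (r^2)..b, g t = d^2/(2*Real.pi) - d*r^2 + r^2*d := by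
      rw [intervalIntegral.integral_congr (g := fun t => (d + Real.pi*r^2) - Real.pi*t)
        (fun t ht => ?_)]
      · rw [intervalIntegral.integral_sub (intervalIntegrable_const)
          ((intervalIntegral.intervalIntegrable_id).const_mul _),
          intervalIntegral.integral_const, intervalIntegral.integral_const_mul,
          integral_id, smul_eq_mul, hbdef]
        have hπ' : Real.pi ≠ 0 := hπ.ne'
        field_simp
        ring
      · rw [Set.uIcc_of_le hrb] at ht
        refine min_eq_right (by nlinarith [ht.1, ht.2, mul_le_mul_of_nonneg_left ht.1 hπ.le])
    rw [← intervalIntegral.integral_of_le hb0, ← hadj, h1, h2]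
    ring
  calc ENNReal.ofReal (r^2*d + d^2/(2*Real.pi))
      = ENNReal.ofReal (∫ t in Set.Ioc (0:ℝ) b, g t) := by rw [hval]
    _ = ∫⁻ t in Set.Ioc (0:ℝ) b, ENNReal.ofReal (g t) := by
        refine ofReal_integral_eq_lintegral_ofReal hgc.integrableOn_Ioc ?_
        refine (ae_restrict_iff' measurableSet_Ioc).mpr (Filter.Eventually.of_forall fun t ht => ?_)
        simp only [Pi.zero_apply]
        refine le_min hd ?_
        have h2 : t ≤ r^2 + d/Real.pi := ht.2
        have h4 : Real.pi * (r^2 + d/Real.pi) = Real.pi*r^2 + d := by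
          field_simp
        have h5 : Real.pi * t ≤ Real.pi*r^2 + d := h4 ▸ mul_le_mul_of_nonneg_left h2 hπ.le
        linarith
    _ ≤ ∫⁻ t in Set.Ioc (0:ℝ) b, volume (S ∩ {x : E2 | t < ‖x‖^2}) :=
        setLIntegral_mono (vol_sq_gt_antitone S).measurable key
    _ ≤ ∫⁻ t in Set.Ioi (0:ℝ), volume (S ∩ {x : E2 | t < ‖x‖^2}) :=
        lintegral_mono_set Set.Ioc_subset_Ioi_self
    _ = ∫⁻ x in S, ENNReal.ofReal (‖x‖^2) := (lint_sq S hS).symm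



lemma lint_inner {r d : ℝ} (hr : 0 ≤ r) (hd : 0 ≤ d) (S : Set E2) (hS : MeasurableSet S)
    (hsub : S ⊆ Metric.ball (0:E2) r) (hvol : volume S = ENNReal.ofReal d) :
    ∫⁻ x in S, ENNReal.ofReal (‖x‖^2) ≤ ENNReal.ofReal (r^2*d - d^2/(2*Real.pi)) := by
  have hπ := Real.pi_pos
  have hdr : d ≤ Real.pi * r^2 := by
    have h1 : volume S ≤ volume (Metric.ball (0:E2) r) := measure_mono hsub
    rw [hvol, vol_ball hr] at h1
    exact (ENNReal.ofReal_le_ofReal_iff (by positivity)).mp h1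
  have hempty : ∀ t : ℝ, r^2 ≤ t → S ∩ {x : E2 | t < ‖x‖^2} = ∅ := by
    intro t h
    ext x
    simp only [mem_inter_iff, mem_setOf_eq, mem_empty_iff_false, iff_false, not_and, not_lt]
    intro hxS
    have hxr := hsub hxS
    rw [mem_ball, dist_zero_right] at hxr
    nlinarith [norm_nonneg x]
  set g : ℝ → ℝ := fun t => max 0 (min d (Real.pi*r^2 - Real.pi*t)) with hgdef
  have hgc : Continuous g := continuous_const.max (continuous_const.min (by fun_prop))
  have key : ∀ t ∈ Set.Ioi (0:ℝ),
      volume (S ∩ {x : E2 | t < ‖x‖^2}) ≤ ENNReal.ofReal (g t) := by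
    intro t ht
    have ht0 : (0:ℝ) ≤ t := le_of_lt ht
    rcases lt_or_ge t (r^2) with h | h
    · have hb1 : volume (S ∩ {x : E2 | t < ‖x‖^2}) ≤ ENNReal.ofReal d := by
        rw [← hvol]; exact measure_mono Set.inter_subset_left
      have hb2 : volume (S ∩ {x : E2 | t < ‖x‖^2}) ≤ ENNReal.ofReal (Real.pi*r^2 - Real.pi*t) := by
        have hsub2 : S ∩ {x : E2 | t < ‖x‖^2} ⊆
            Metric.ball (0:E2) r \ Metric.closedBall (0:E2) (Real.sqrt t) := by
          intro x hx
          refine ⟨hsub hx.1, fun hcb => ?_⟩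
          rw [← sq_gt_compl ht0] at hcb
          exact hcb hx.2
        have hrt : Metric.closedBall (0:E2) (Real.sqrt t) ⊆ Metric.ball (0:E2) r := by
          refine Metric.closedBall_subset_ball ?_
          rw [show r = Real.sqrt (r^2) from (Real.sqrt_sq hr).symm]
          exact Real.sqrt_lt_sqrt ht0 h
        refine le_trans (measure_mono hsub2) ?_
        rw [measure_diff hrt measurableSet_closedBall.nullMeasurableSet
          (by rw [vol_cball (Real.sqrt_nonneg t)]; exact ENNReal.ofReal_ne_top),
          vol_ball hr, vol_cball (Real.sqrt_nonneg t), Real.sq_sqrt ht0,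
          ← ENNReal.ofReal_sub _ (by positivity)]
      have hgt : g t = min d (Real.pi*r^2 - Real.pi*t) := by
        refine max_eq_right (le_min hd (by nlinarith))
      rw [hgt]
      rcases le_total d (Real.pi*r^2 - Real.pi*t) with hc | hc
      · rw [min_eq_left hc]; exact hb1
      · rw [min_eq_right hc]; exact hb2
    · simp [hempty t h]
  have hsplit : ∫⁻ t in Set.Ioi (0:ℝ), volume (S ∩ {x : E2 | t < ‖x‖^2}) =
      (∫⁻ t in Set.Ioc (0:ℝ) (r^2), volume (S ∩ {x : E2 | t < ‖x‖^2})) +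
      ∫⁻ t in Set.Ioi (r^2), volume (S ∩ {x : E2 | t < ‖x‖^2}) := by
    rw [← lintegral_union measurableSet_Ioi Set.Ioc_disjoint_Ioi_same,
      Set.Ioc_union_Ioi_eq_Ioi (by positivity)]
  have hzero : ∫⁻ t in Set.Ioi (r^2), volume (S ∩ {x : E2 | t < ‖x‖^2}) = 0 := by
    have hae : ∀ᵐ t ∂(volume.restrict (Set.Ioi (r^2))),
        volume (S ∩ {x : E2 | t < ‖x‖^2}) = 0 :=
      (ae_restrict_iff' measurableSet_Ioi).mpr
        (Filter.Eventually.of_forall fun t ht => by simp [hempty t (le_of_lt ht)])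
    rw [lintegral_congr_ae hae, lintegral_zero]
  have hr20 : (0:ℝ) ≤ r^2 := by positivity
  set c : ℝ := r^2 - d/Real.pi with hcdef
  have hπc : Real.pi * c = Real.pi*r^2 - d := by
    rw [hcdef, mul_sub]
    congr 1
    field_simp
  have h0c : 0 ≤ c := by
    rw [hcdef]
    rw [sub_nonneg, div_le_iff₀ hπ]
    linarith
  have hcr : c ≤ r^2 := by
    rw [hcdef]; have : 0 ≤ d/Real.pi := by positivity
    linarith
  have hii : ∀ u v : ℝ, IntervalIntegrable g volume u v := fun u v => hgc.intervalIntegrable u v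
  have hadj := intervalIntegral.integral_add_adjacent_intervals (hii 0 c) (hii c (r^2))
  have h1 : ∫ t in (0:ℝ)..c, g t = c * d := by
    rw [intervalIntegral.integral_congr (g := fun _ => d) (fun t ht => ?_),
      intervalIntegral.integral_const, smul_eq_mul]
    · ring
    · rw [Set.uIcc_of_le h0c] at ht
      have := mul_le_mul_of_nonneg_left ht.2 hπ.le
      rw [hgdef]
      show max 0 (min d _) = d
      rw [min_eq_left (by linarith), max_eq_right hd]
  have h2 : ∫ t in c..(r^2), g t = (r^2 - c) * (Real.pi*r^2) - Real.pi*((r^2)^2 - c^2)/2 := by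
    rw [intervalIntegral.integral_congr (g := fun t => Real.pi*r^2 - Real.pi*t) (fun t ht => ?_)]
    · rw [intervalIntegral.integral_sub intervalIntegrable_const
        ((intervalIntegral.intervalIntegrable_id).const_mul _),
        intervalIntegral.integral_const, intervalIntegral.integral_const_mul,
        integral_id, smul_eq_mul]
      ring
    · rw [Set.uIcc_of_le hcr] at ht
      have hu := mul_le_mul_of_nonneg_left ht.2 hπ.le
      have hl := mul_le_mul_of_nonneg_left ht.1 hπ.le
      rw [hgdef]
      show max 0 (min d _) = _
      rw [min_eq_right (by linarith), max_eq_right (by linarith)]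
  have hval : ∫ t in Set.Ioc (0:ℝ) (r^2), g t = r^2*d - d^2/(2*Real.pi) := by
    rw [← intervalIntegral.integral_of_le hr20, ← hadj, h1, h2, hcdef]
    field_simp
    ring
  calc ∫⁻ x in S, ENNReal.ofReal (‖x‖^2)
      = ∫⁻ t in Set.Ioi (0:ℝ), volume (S ∩ {x : E2 | t < ‖x‖^2}) := lint_sq S hS
    _ = ∫⁻ t in Set.Ioc (0:ℝ) (r^2), volume (S ∩ {x : E2 | t < ‖x‖^2}) := by
        rw [hsplit, hzero, add_zero]
    _ ≤ ∫⁻ t in Set.Ioc (0:ℝ) (r^2), ENNReal.ofReal (g t) :=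
        setLIntegral_mono (ENNReal.measurable_ofReal.comp hgc.measurable)
          (fun t ht => key t (Set.Ioc_subset_Ioi_self ht))
    _ = ENNReal.ofReal (∫ t in Set.Ioc (0:ℝ) (r^2), g t) := by
        refine (ofReal_integral_eq_lintegral_ofReal hgc.integrableOn_Ioc ?_).symm
        exact (ae_restrict_iff' measurableSet_Ioc).mpr (Filter.Eventually.of_forall
          (fun t _ => le_max_left 0 _))
    _ = ENNReal.ofReal (r^2*d - d^2/(2*Real.pi)) := by rw [hval]



lemma ball_le_gain {ρ : ℝ} (hρ : 0 ≤ ρ) (A : Set E2) (hA : MeasurableSet A)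
    (hvol : volume A = ENNReal.ofReal (Real.pi * ρ^2)) :
    (∫⁻ x in Metric.ball (0:E2) ρ, ENNReal.ofReal (‖x‖^2)) +
      ENNReal.ofReal ((volume (A \ Metric.ball (0:E2) ρ)).toReal^2 / Real.pi)
      ≤ ∫⁻ x in A, ENNReal.ofReal (‖x‖^2) := by
  have hπ := Real.pi_pos
  set B := Metric.ball (0:E2) ρ with hBdef
  have hAfin : volume A ≠ ∞ := by rw [hvol]; exact ENNReal.ofReal_ne_top
  set δ : ℝ := (volume (A \ B)).toReal with hδdef
  have hδ0 : 0 ≤ δ := ENNReal.toReal_nonneg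
  have hABfin : volume (A \ B) ≠ ∞ := (measure_mono Set.diff_subset).trans_lt hAfin.lt_top |>.ne
  have hδ : volume (A \ B) = ENNReal.ofReal δ := (ENNReal.ofReal_toReal hABfin).symm
  -- equal measure of the two "difference" pieces
  have hBA : volume (B \ A) = ENNReal.ofReal δ := by
    have h1 : volume (B ∩ A) + volume (B \ A) = volume B := measure_inter_add_diff B hA
    have h2 : volume (A ∩ B) + volume (A \ B) = volume A := measure_inter_add_diff A measurableSet_ball
    rw [vol_ball hρ] at h1
    rw [hvol] at h2
    rw [Set.inter_comm] at h1
    have h3 : volume (A ∩ B) + volume (B \ A) = volume (A ∩ B) + volume (A \ B) := by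
      rw [h1, h2]
    have hABi : volume (A ∩ B) ≠ ∞ := (measure_mono Set.inter_subset_left).trans_lt hAfin.lt_top |>.ne
    rw [ENNReal.add_right_inj hABi] at h3
    rw [h3, hδ]
  have hδπ : δ ≤ Real.pi * ρ^2 := by
    have h1 : volume (A \ B) ≤ volume A := measure_mono Set.diff_subset
    rw [hδ, hvol] at h1
    exact (ENNReal.ofReal_le_ofReal_iff (by positivity)).mp h1
  -- splits
  have hnn : 0 ≤ ρ^2*δ - δ^2/(2*Real.pi) := by
    rw [sub_nonneg, div_le_iff₀ (by positivity)]
    nlinarith [mul_le_mul_of_nonneg_left hδπ hδ0]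
  have hsplitB : ∫⁻ x in B, ENNReal.ofReal (‖x‖^2) =
      (∫⁻ x in A ∩ B, ENNReal.ofReal (‖x‖^2)) + ∫⁻ x in B \ A, ENNReal.ofReal (‖x‖^2) := by
    have hu : (A ∩ B) ∪ (B \ A) = B := by
      rw [Set.inter_comm]; exact Set.inter_union_diff B A
    conv_lhs => rw [← hu]
    exact lintegral_union (measurableSet_ball.diff hA)
      (disjoint_sdiff_right.mono_left Set.inter_subset_left)
  have hsplitA : ∫⁻ x in A, ENNReal.ofReal (‖x‖^2) =
      (∫⁻ x in A ∩ B, ENNReal.ofReal (‖x‖^2)) + ∫⁻ x in A \ B, ENNReal.ofReal (‖x‖^2) := by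
    conv_lhs => rw [← Set.inter_union_diff A B]
    exact lintegral_union (hA.diff measurableSet_ball)
      (disjoint_sdiff_right.mono_left Set.inter_subset_right)
  have hinner : ∫⁻ x in B \ A, ENNReal.ofReal (‖x‖^2) ≤
      ENNReal.ofReal (ρ^2*δ - δ^2/(2*Real.pi)) :=
    lint_inner hρ hδ0 (B \ A) (measurableSet_ball.diff hA) Set.diff_subset hBA
  have houter : ENNReal.ofReal (ρ^2*δ + δ^2/(2*Real.pi)) ≤
      ∫⁻ x in A \ B, ENNReal.ofReal (‖x‖^2) := by
    refine lint_outer hρ hδ0 (A \ B) (hA.diff measurableSet_ball) (fun x hx => ?_) hδ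
    have := hx.2
    rw [hBdef, mem_ball, dist_zero_right] at this
    exact not_lt.mp this
  calc (∫⁻ x in B, ENNReal.ofReal (‖x‖^2)) + ENNReal.ofReal (δ^2 / Real.pi)
      = (∫⁻ x in A ∩ B, ENNReal.ofReal (‖x‖^2)) + ((∫⁻ x in B \ A, ENNReal.ofReal (‖x‖^2)) +
        ENNReal.ofReal (δ^2 / Real.pi)) := by rw [hsplitB, add_assoc]
    _ ≤ (∫⁻ x in A ∩ B, ENNReal.ofReal (‖x‖^2)) + (ENNReal.ofReal (ρ^2*δ - δ^2/(2*Real.pi)) +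
        ENNReal.ofReal (δ^2 / Real.pi)) := by
        gcongr
    _ = (∫⁻ x in A ∩ B, ENNReal.ofReal (‖x‖^2)) + ENNReal.ofReal (ρ^2*δ + δ^2/(2*Real.pi)) := by
        rw [← ENNReal.ofReal_add hnn (by positivity)]
        congr 1
        ring
    _ ≤ (∫⁻ x in A ∩ B, ENNReal.ofReal (‖x‖^2)) + ∫⁻ x in A \ B, ENNReal.ofReal (‖x‖^2) := by
        gcongr
    _ = ∫⁻ x in A, ENNReal.ofReal (‖x‖^2) := hsplitA.symm




section Basic
variable (f : E2 → ℝ)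

lemma levelRadius_nonneg (ξ : ℝ) : 0 ≤ levelRadius f ξ := Real.sqrt_nonneg _

lemma measurable_levelSetVol : Measurable fun ξ : ℝ => volume {y : E2 | ξ < f y} := by
  have : Antitone fun ξ : ℝ => volume {y : E2 | ξ < f y} :=
    fun a b hab => measure_mono fun y hy => lt_of_le_of_lt hab hy
  exact this.measurable

lemma measurable_levelRadius : Measurable (levelRadius f) := by
  unfold levelRadius
  exact (Real.continuous_sqrt.measurable).comp
    (((measurable_levelSetVol f).ennreal_toReal).div_const _)

variable {f}
variable (hmeas : Measurable f) (hpos : ∀ x, 0 ≤ f x) (hbdd : MemLp f ⊤ volume)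
    (hJ : Integrable (fun x : E2 => ‖x‖ ^ 2 * f x))

include hmeas in
lemma levelSet_meas (ξ : ℝ) : MeasurableSet {y : E2 | ξ < f y} :=
  measurableSet_lt measurable_const hmeas

include hmeas hpos hJ in
lemma levelSet_finite {ξ : ℝ} (hξ : 0 < ξ) : volume {y : E2 | ξ < f y} ≠ ∞ := by
  have hsub : {y : E2 | ξ < f y} ⊆ Metric.ball (0:E2) 1 ∪
      {y : E2 | ENNReal.ofReal ξ ≤ ENNReal.ofReal (‖y‖^2 * f y)} := by
    intro y hy
    rcases lt_or_ge ‖y‖ 1 with h | h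
    · exact Or.inl (by simpa [mem_ball, dist_zero_right] using h)
    · refine Or.inr ?_
      have h1 : (1:ℝ) ≤ ‖y‖^2 := by nlinarith
      have : ξ ≤ ‖y‖^2 * f y := by nlinarith [hy.out, hpos y]
      exact ENNReal.ofReal_le_ofReal this
  refine ((measure_mono hsub).trans_lt (lt_of_le_of_lt (measure_union_le _ _) ?_)).ne
  have h1 : volume (Metric.ball (0:E2) 1) < ∞ := by
    rw [vol_ball zero_le_one]; exact ENNReal.ofReal_lt_top
  have h2 : volume {y : E2 | ENNReal.ofReal ξ ≤ ENNReal.ofReal (‖y‖^2 * f y)} < ∞ := by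
    have hm : AEMeasurable (fun y : E2 => ENNReal.ofReal (‖y‖^2 * f y)) volume :=
      (ENNReal.measurable_ofReal.comp ((measurable_norm.pow_const 2).mul hmeas)).aemeasurable
    refine lt_of_le_of_lt (meas_ge_le_lintegral_div hm
      (by simpa [ENNReal.ofReal_eq_zero, not_le] using hξ) ENNReal.ofReal_ne_top) ?_
    have hfin : ∫⁻ y : E2, ENNReal.ofReal (‖y‖^2 * f y) < ∞ := by
      refine lt_of_le_of_lt (lintegral_mono fun y => ?_) hJ.2
      rw [Real.enorm_eq_ofReal_abs]
      exact ENNReal.ofReal_le_ofReal (le_abs_self _)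
    exact ENNReal.div_lt_top hfin.ne (by simpa [ENNReal.ofReal_eq_zero, not_le] using hξ)
  exact ENNReal.add_lt_top.mpr ⟨h1, h2⟩

include hmeas hpos hJ in
lemma vol_ball_levelRadius {ξ : ℝ} (hξ : 0 < ξ) :
    volume (Metric.ball (0:E2) (levelRadius f ξ)) = volume {y : E2 | ξ < f y} := by
  rw [vol_ball (levelRadius_nonneg f ξ)]
  unfold levelRadius
  rw [Real.sq_sqrt (by positivity), mul_div_cancel₀ _ Real.pi_pos.ne',
    ENNReal.ofReal_toReal (levelSet_finite hmeas hpos hJ hξ)]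

include hbdd in
lemma levelSet_null {ξ : ℝ} (hξ : (eLpNorm f ⊤ volume).toReal ≤ ξ) :
    volume {y : E2 | ξ < f y} = 0 := by
  have hae : ∀ᵐ y : E2, ‖f y‖₊ ≤ eLpNormEssSup f volume := ae_le_eLpNormEssSup
  have hfin : eLpNormEssSup f volume ≠ ∞ := by
    have := hbdd.2
    rwa [eLpNorm_exponent_top, lt_top_iff_ne_top] at this
  rw [measure_eq_zero_iff_ae_notMem]
  filter_upwards [hae] with y hy
  simp only [mem_setOf_eq, not_lt]
  have h1 : ‖f y‖ ≤ (eLpNormEssSup f volume).toReal := by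
    have h2 := ENNReal.toReal_mono hfin (by exact_mod_cast hy : (‖f y‖₊ : ℝ≥0∞) ≤ _)
    simpa [coe_nnnorm] using h2
  have h3 : (eLpNormEssSup f volume).toReal = (eLpNorm f ⊤ volume).toReal := by
    rw [eLpNorm_exponent_top]
  rw [Real.norm_eq_abs] at h1
  have := le_abs_self (f y)
  linarith

include hbdd in
lemma levelRadius_zero {ξ : ℝ} (hξ : (eLpNorm f ⊤ volume).toReal ≤ ξ) :
    levelRadius f ξ = 0 := by
  unfold levelRadius
  rw [levelSet_null hbdd hξ]
  simp

-- the superlevel sets of the rearrangement parametrization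
include hbdd in
lemma mem_T_le {x : E2} {ξ : ℝ} (h : ‖x‖ < levelRadius f ξ) :
    ξ ≤ (eLpNorm f ⊤ volume).toReal := by
  by_contra hc
  push_neg at hc
  rw [levelRadius_zero hbdd hc.le] at h
  exact absurd (norm_nonneg x) (not_le.mpr h)

lemma measurable_T (x : E2) : MeasurableSet {ξ : ℝ | ‖x‖ < levelRadius f ξ} :=
  measurableSet_lt measurable_const (measurable_levelRadius f)

include hbdd in
lemma Q_le (x : E2) :
    (volume.restrict (Set.Ioi (0:ℝ))) {ξ : ℝ | ‖x‖ < levelRadius f ξ} ≤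
      ENNReal.ofReal ((eLpNorm f ⊤ volume).toReal) := by
  rw [Measure.restrict_apply (measurable_T x)]
  refine le_trans (measure_mono (t := Set.Ioc 0 ((eLpNorm f ⊤ volume).toReal))
    (fun ξ hξ => ⟨hξ.2, mem_T_le hbdd hξ.1⟩)) ?_
  rw [Real.volume_Ioc]
  exact ENNReal.ofReal_le_ofReal (by simp)

include hbdd in
lemma Q_ne_top (x : E2) :
    (volume.restrict (Set.Ioi (0:ℝ))) {ξ : ℝ | ‖x‖ < levelRadius f ξ} ≠ ∞ :=
  ((Q_le hbdd x).trans_lt ENNReal.ofReal_lt_top).ne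

lemma rearrangement_eq (x : E2) :
    rearrangement f x =
      ((volume.restrict (Set.Ioi (0:ℝ))) {ξ : ℝ | ‖x‖ < levelRadius f ξ}).toReal := by
  unfold rearrangement
  have h1 : (fun ξ : ℝ => if ‖x‖ < levelRadius f ξ then (1:ℝ) else 0) =
      Set.indicator {ξ : ℝ | ‖x‖ < levelRadius f ξ} (fun _ => (1:ℝ)) := by
    ext ξ
    rw [Set.indicator_apply]
    rfl
  rw [h1, integral_indicator (measurable_T x), setIntegral_const, smul_eq_mul, mul_one]
  rfl

lemma measurable_rearrangement : Measurable (rearrangement f) := by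
  have h1 : rearrangement f = (fun s : ℝ =>
      ((volume.restrict (Set.Ioi (0:ℝ))) {ξ : ℝ | s < levelRadius f ξ}).toReal) ∘ norm := by
    ext x
    exact rearrangement_eq x
  rw [h1]
  have h2 : Antitone (fun s : ℝ =>
      (volume.restrict (Set.Ioi (0:ℝ))) {ξ : ℝ | s < levelRadius f ξ}) :=
    fun a b hab => measure_mono fun ξ hξ => lt_of_le_of_lt hab hξ
  exact (ENNReal.measurable_toReal.comp h2.measurable).comp measurable_norm

lemma rearrangement_nonneg (x : E2) : 0 ≤ rearrangement f x := by
  rw [rearrangement_eq]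
  exact ENNReal.toReal_nonneg

include hbdd in
lemma ofReal_rearrangement (x : E2) :
    ENNReal.ofReal (rearrangement f x) =
      (volume.restrict (Set.Ioi (0:ℝ))) {ξ : ℝ | ‖x‖ < levelRadius f ξ} := by
  rw [rearrangement_eq, ENNReal.ofReal_toReal (Q_ne_top hbdd x)]

include hpos in
lemma ofReal_f (x : E2) :
    ENNReal.ofReal (f x) = (volume.restrict (Set.Ioi (0:ℝ))) {ξ : ℝ | ξ < f x} := by
  have h0 : {ξ : ℝ | ξ < f x} = Set.Iio (f x) := rfl
  rw [h0, Measure.restrict_apply measurableSet_Iio]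
  have h1 : Set.Iio (f x) ∩ Set.Ioi 0 = Set.Ioo 0 (f x) := by
    ext ξ
    simp only [mem_inter_iff, mem_Iio, mem_Ioi, mem_Ioo]
    tauto
  rw [h1, Real.volume_Ioo, sub_zero]

end Basic

section Kernels
variable (f : E2 → ℝ)

noncomputable def Uk : E2 × ℝ → ℝ≥0∞ := fun p => if p.2 < f p.1 then 1 else 0
noncomputable def Vk : E2 × ℝ → ℝ≥0∞ := fun p => if ‖p.1‖ < levelRadius f p.2 then 1 else 0
noncomputable def Wk : E2 × ℝ → ℝ≥0∞ := fun p => (Uk f p - Vk f p) ⊔ (Vk f p - Uk f p)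

variable {f}

lemma measurable_Uk (hmeas : Measurable f) : Measurable (Uk f) := by
  unfold Uk
  exact Measurable.ite (measurableSet_lt measurable_snd (hmeas.comp measurable_fst))
    measurable_const measurable_const

lemma measurable_Vk : Measurable (Vk f) := by
  unfold Vk
  exact Measurable.ite (measurableSet_lt (measurable_norm.comp measurable_fst)
    ((measurable_levelRadius f).comp measurable_snd)) measurable_const measurable_const

lemma measurable_Wk (hmeas : Measurable f) : Measurable (Wk f) :=
  ((measurable_Uk hmeas).sub measurable_Vk).max (measurable_Vk.sub (measurable_Uk hmeas))

lemma Uk_slice (hpos : ∀ x, 0 ≤ f x) (x : E2) :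
    ∫⁻ ξ in Set.Ioi (0:ℝ), Uk f (x, ξ) = ENNReal.ofReal (f x) := by
  classical
  have h0 : {ξ : ℝ | ξ < f x} = Set.Iio (f x) := rfl
  have h1 : (fun ξ : ℝ => Uk f (x, ξ)) = Set.indicator (Set.Iio (f x)) (fun _ => 1) := by
    ext ξ
    rw [Set.indicator_apply]
    rfl
  rw [h1, lintegral_indicator measurableSet_Iio, setLIntegral_one, ofReal_f hpos x, h0]

lemma Vk_slice (x : E2) :
    ∫⁻ ξ in Set.Ioi (0:ℝ), Vk f (x, ξ) =
      (volume.restrict (Set.Ioi (0:ℝ))) {ξ : ℝ | ‖x‖ < levelRadius f ξ} := by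
  have h1 : (fun ξ : ℝ => Vk f (x, ξ)) =
      Set.indicator {ξ : ℝ | ‖x‖ < levelRadius f ξ} (fun _ => 1) := by
    classical
    ext ξ
    rw [Set.indicator_apply]
    rfl
  rw [h1, lintegral_indicator (measurable_T x), setLIntegral_one]

lemma KUk_slice (hmeas : Measurable f) (ξ : ℝ) :
    ∫⁻ x : E2, ENNReal.ofReal (‖x‖^2) * Uk f (x, ξ) =
      ∫⁻ x in {y : E2 | ξ < f y}, ENNReal.ofReal (‖x‖^2) := by
  have h1 : (fun x : E2 => ENNReal.ofReal (‖x‖^2) * Uk f (x, ξ)) =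
      Set.indicator {y : E2 | ξ < f y} (fun x => ENNReal.ofReal (‖x‖^2)) := by
    classical
    ext x
    rw [Set.indicator_apply]
    unfold Uk
    by_cases h : ξ < f x <;> simp [h]
  rw [h1, lintegral_indicator (levelSet_meas hmeas ξ)]

lemma KVk_slice (ξ : ℝ) :
    ∫⁻ x : E2, ENNReal.ofReal (‖x‖^2) * Vk f (x, ξ) =
      ∫⁻ x in Metric.ball (0:E2) (levelRadius f ξ), ENNReal.ofReal (‖x‖^2) := by
  have h1 : (fun x : E2 => ENNReal.ofReal (‖x‖^2) * Vk f (x, ξ)) =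
      Set.indicator (Metric.ball (0:E2) (levelRadius f ξ)) (fun x => ENNReal.ofReal (‖x‖^2)) := by
    classical
    ext x
    rw [Set.indicator_apply]
    unfold Vk
    by_cases h : ‖x‖ < levelRadius f ξ <;> simp [h, mem_ball, dist_zero_right]
  rw [h1, lintegral_indicator measurableSet_ball]

lemma Wk_slice (hmeas : Measurable f) (ξ : ℝ) :
    ∫⁻ x : E2, Wk f (x, ξ) =
      volume ({y : E2 | ξ < f y} \ Metric.ball (0:E2) (levelRadius f ξ)) +
      volume (Metric.ball (0:E2) (levelRadius f ξ) \ {y : E2 | ξ < f y}) := by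
  set A := {y : E2 | ξ < f y}
  set B := Metric.ball (0:E2) (levelRadius f ξ)
  have h1 : (fun x : E2 => Wk f (x, ξ)) =
      fun x => Set.indicator (A \ B) (fun _ => (1:ℝ≥0∞)) x +
        Set.indicator (B \ A) (fun _ => (1:ℝ≥0∞)) x := by
    classical
    ext x
    have hA : x ∈ A ↔ ξ < f x := Iff.rfl
    have hB : x ∈ B ↔ ‖x‖ < levelRadius f ξ := mem_ball_zero_iff
    rw [Set.indicator_apply, Set.indicator_apply]
    unfold Wk Uk Vk
    by_cases h1 : ξ < f x <;> by_cases h2 : ‖x‖ < levelRadius f ξ <;>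
      simp [h1, h2, Set.mem_diff, hA, hB]
  rw [h1, lintegral_add_left (measurable_const.indicator ((levelSet_meas hmeas ξ).diff
    measurableSet_ball)), lintegral_indicator ((levelSet_meas hmeas ξ).diff measurableSet_ball),
    lintegral_indicator (measurableSet_ball.diff (levelSet_meas hmeas ξ)),
    setLIntegral_one, setLIntegral_one]

lemma ofReal_abs_sub_le {P Q R : ℝ≥0∞} (hP : P ≠ ∞) (hQ : Q ≠ ∞)
    (h1 : P ≤ Q + R) (h2 : Q ≤ P + R) :
    ENNReal.ofReal |P.toReal - Q.toReal| ≤ R := by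
  rcases le_total P.toReal Q.toReal with h | h
  · rw [abs_of_nonpos (by linarith), neg_sub, ENNReal.ofReal_sub _ ENNReal.toReal_nonneg,
      ENNReal.ofReal_toReal hQ, ENNReal.ofReal_toReal hP]
    exact tsub_le_iff_right.mpr (h2.trans_eq (add_comm _ _))
  · rw [abs_of_nonneg (by linarith), ENNReal.ofReal_sub _ ENNReal.toReal_nonneg,
      ENNReal.ofReal_toReal hP, ENNReal.ofReal_toReal hQ]
    exact tsub_le_iff_right.mpr (h1.trans_eq (add_comm _ _))

lemma Uk_le : ∀ p, Uk f p ≤ Vk f p + Wk f p := fun p =>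
  calc Uk f p ≤ (Uk f p - Vk f p) + Vk f p := le_tsub_add
    _ ≤ Wk f p + Vk f p := add_le_add_left (le_max_left _ _) _
    _ = Vk f p + Wk f p := add_comm _ _

lemma Vk_le : ∀ p, Vk f p ≤ Uk f p + Wk f p := fun p =>
  calc Vk f p ≤ (Vk f p - Uk f p) + Uk f p := le_tsub_add
    _ ≤ Wk f p + Uk f p := add_le_add_left (le_max_right _ _) _
    _ = Uk f p + Wk f p := add_comm _ _

lemma pointwise_bound (hmeas : Measurable f) (hpos : ∀ x, 0 ≤ f x)
    (hbdd : MemLp f ⊤ volume) (x : E2) :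
    ENNReal.ofReal |f x - rearrangement f x| ≤ ∫⁻ ξ in Set.Ioi (0:ℝ), Wk f (x, ξ) := by
  have hVm : Measurable fun ξ : ℝ => Vk f (x, ξ) :=
    measurable_Vk.comp (measurable_prodMk_left)
  have hUm : Measurable fun ξ : ℝ => Uk f (x, ξ) :=
    (measurable_Uk hmeas).comp (measurable_prodMk_left)
  have hWm : Measurable fun ξ : ℝ => Wk f (x, ξ) :=
    (measurable_Wk hmeas).comp (measurable_prodMk_left)
  have hfx : f x = (ENNReal.ofReal (f x)).toReal := (ENNReal.toReal_ofReal (hpos x)).symm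
  have hfsx : rearrangement f x =
      ((volume.restrict (Set.Ioi (0:ℝ))) {ξ : ℝ | ‖x‖ < levelRadius f ξ}).toReal :=
    rearrangement_eq x
  rw [show |f x - rearrangement f x| = |(ENNReal.ofReal (f x)).toReal -
    ((volume.restrict (Set.Ioi (0:ℝ))) {ξ : ℝ | ‖x‖ < levelRadius f ξ}).toReal| by
      rw [← hfx, ← hfsx]]
  refine ofReal_abs_sub_le ENNReal.ofReal_ne_top (Q_ne_top hbdd x) ?_ ?_
  · rw [← Uk_slice hpos x, ← Vk_slice x]
    calc ∫⁻ ξ in Set.Ioi (0:ℝ), Uk f (x, ξ)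
        ≤ ∫⁻ ξ in Set.Ioi (0:ℝ), (Vk f (x, ξ) + Wk f (x, ξ)) :=
          lintegral_mono fun ξ => Uk_le (x, ξ)
      _ = (∫⁻ ξ in Set.Ioi (0:ℝ), Vk f (x, ξ)) + ∫⁻ ξ in Set.Ioi (0:ℝ), Wk f (x, ξ) :=
          lintegral_add_left hVm _
  · rw [← Uk_slice hpos x, ← Vk_slice x]
    calc ∫⁻ ξ in Set.Ioi (0:ℝ), Vk f (x, ξ)
        ≤ ∫⁻ ξ in Set.Ioi (0:ℝ), (Uk f (x, ξ) + Wk f (x, ξ)) :=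
          lintegral_mono fun ξ => Vk_le (x, ξ)
      _ = (∫⁻ ξ in Set.Ioi (0:ℝ), Uk f (x, ξ)) + ∫⁻ ξ in Set.Ioi (0:ℝ), Wk f (x, ξ) :=
          lintegral_add_left hUm _

lemma L_le (hmeas : Measurable f) (hpos : ∀ x, 0 ≤ f x) (hbdd : MemLp f ⊤ volume) :
    ∫⁻ x : E2, ENNReal.ofReal |f x - rearrangement f x| ≤
      ∫⁻ ξ in Set.Ioi (0:ℝ), ∫⁻ x : E2, Wk f (x, ξ) := by
  calc ∫⁻ x : E2, ENNReal.ofReal |f x - rearrangement f x|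
      ≤ ∫⁻ x : E2, ∫⁻ ξ in Set.Ioi (0:ℝ), Wk f (x, ξ) :=
        lintegral_mono (pointwise_bound hmeas hpos hbdd)
    _ = ∫⁻ ξ in Set.Ioi (0:ℝ), ∫⁻ x : E2, Wk f (x, ξ) :=
        lintegral_lintegral_swap (measurable_Wk hmeas).aemeasurable

lemma Jf_eq (hmeas : Measurable f) (hpos : ∀ x, 0 ≤ f x) :
    ∫⁻ x : E2, ENNReal.ofReal (‖x‖^2) * ENNReal.ofReal (f x) =
      ∫⁻ ξ in Set.Ioi (0:ℝ), ∫⁻ x in {y : E2 | ξ < f y}, ENNReal.ofReal (‖x‖^2) := by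
  have h1 : ∀ x : E2, ENNReal.ofReal (‖x‖^2) * ENNReal.ofReal (f x) =
      ∫⁻ ξ in Set.Ioi (0:ℝ), ENNReal.ofReal (‖x‖^2) * Uk f (x, ξ) := fun x => by
    rw [lintegral_const_mul _ (show Measurable fun ξ : ℝ => Uk f (x, ξ) from
      (measurable_Uk hmeas).comp measurable_prodMk_left), Uk_slice hpos x]
  rw [lintegral_congr h1, lintegral_lintegral_swap
    (((measurable_norm.pow_const 2).ennreal_ofReal.comp measurable_fst).mul
      (measurable_Uk hmeas)).aemeasurable]
  exact lintegral_congr fun ξ => KUk_slice hmeas ξ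

lemma Jfstar_eq (hmeas : Measurable f) (hbdd : MemLp f ⊤ volume) :
    ∫⁻ x : E2, ENNReal.ofReal (‖x‖^2) * ENNReal.ofReal (rearrangement f x) =
      ∫⁻ ξ in Set.Ioi (0:ℝ), ∫⁻ x in Metric.ball (0:E2) (levelRadius f ξ),
        ENNReal.ofReal (‖x‖^2) := by
  have h1 : ∀ x : E2, ENNReal.ofReal (‖x‖^2) * ENNReal.ofReal (rearrangement f x) =
      ∫⁻ ξ in Set.Ioi (0:ℝ), ENNReal.ofReal (‖x‖^2) * Vk f (x, ξ) := fun x => by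
    rw [lintegral_const_mul _ (show Measurable fun ξ : ℝ => Vk f (x, ξ) from
      measurable_Vk.comp measurable_prodMk_left), Vk_slice x, ofReal_rearrangement hbdd x]
  rw [lintegral_congr h1, lintegral_lintegral_swap
    (((measurable_norm.pow_const 2).ennreal_ofReal.comp measurable_fst).mul
      measurable_Vk).aemeasurable]
  exact lintegral_congr fun ξ => KVk_slice ξ

end Kernels

set_option maxHeartbeats 1000000 in
/-- `‖f − f*‖_{L¹}² ≤ 4π ‖f‖_∞ (J(f) − J(f*))`. -/
theorem rearrangement_L1_impulse_estimate
    (f : E2 → ℝ) (hmeas : Measurable f) (hpos : ∀ x, 0 ≤ f x)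
    (hbdd : MemLp f ⊤ volume)
    (hJ : Integrable (fun x : E2 => ‖x‖ ^ 2 * f x)) :
    (∫ x : E2, |f x - rearrangement f x|) ^ 2 ≤
      4 * Real.pi * (eLpNorm f ⊤ volume).toReal *
        ((∫ x : E2, ‖x‖ ^ 2 * f x) - ∫ x : E2, ‖x‖ ^ 2 * rearrangement f x) := by
  have hπ := Real.pi_pos
  set M : ℝ := (eLpNorm f ⊤ volume).toReal with hMdef
  have hM0 : 0 ≤ M := ENNReal.toReal_nonneg
  set K : E2 → ℝ≥0∞ := fun x => ENNReal.ofReal (‖x‖^2) with hKdef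
  set FA : ℝ → ℝ≥0∞ := fun ξ => ∫⁻ x in {y : E2 | ξ < f y}, K x with hFAdef
  set FB : ℝ → ℝ≥0∞ := fun ξ => ∫⁻ x in Metric.ball (0:E2) (levelRadius f ξ), K x with hFBdef
  set DD : ℝ → ℝ≥0∞ := fun ξ => ∫⁻ x : E2, Wk f (x, ξ) with hDDdef
  set dd : ℝ → ℝ≥0∞ := fun ξ =>
    volume ({y : E2 | ξ < f y} \ Metric.ball (0:E2) (levelRadius f ξ)) with hdddef
  set G2 : ℝ → ℝ≥0∞ := fun ξ => ENNReal.ofReal ((dd ξ).toReal^2 / Real.pi) with hG2def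
  set Jf : ℝ≥0∞ := ∫⁻ x : E2, K x * ENNReal.ofReal (f x) with hJfdef
  set Jfs : ℝ≥0∞ := ∫⁻ x : E2, K x * ENNReal.ofReal (rearrangement f x) with hJfsdef
  set L : ℝ≥0∞ := ∫⁻ x : E2, ENNReal.ofReal |f x - rearrangement f x| with hLdef
  -- measurability of the level-set functionals
  have hFAm : Measurable FA := by
    have h : FA = fun ξ => ∫⁻ x : E2, K x * Uk f (x, ξ) := by
      funext ξ; exact (KUk_slice hmeas ξ).symm
    rw [h]
    exact Measurable.lintegral_prod_left
      (((measurable_norm.pow_const 2).ennreal_ofReal.comp measurable_fst).mul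
        (measurable_Uk hmeas))
  have hFBm : Measurable FB := by
    have h : FB = fun ξ => ∫⁻ x : E2, K x * Vk f (x, ξ) := by
      funext ξ; exact (KVk_slice ξ).symm
    rw [h]
    exact Measurable.lintegral_prod_left
      (((measurable_norm.pow_const 2).ennreal_ofReal.comp measurable_fst).mul measurable_Vk)
  have hDDm : Measurable DD :=
    Measurable.lintegral_prod_left (measurable_Wk hmeas)
  -- the per-level gain
  have hgain : ∀ ξ ∈ Set.Ioi (0:ℝ), FB ξ + G2 ξ ≤ FA ξ := by
    intro ξ hξ
    have hvolA : volume {y : E2 | ξ < f y} =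
        ENNReal.ofReal (Real.pi * (levelRadius f ξ)^2) := by
      rw [← vol_ball_levelRadius hmeas hpos hJ hξ, vol_ball (levelRadius_nonneg f ξ)]
    exact ball_le_gain (levelRadius_nonneg f ξ) _ (levelSet_meas hmeas ξ) hvolA
  have hJfFA : Jf = ∫⁻ ξ in Set.Ioi (0:ℝ), FA ξ := Jf_eq hmeas hpos
  have hJfsFB : Jfs = ∫⁻ ξ in Set.Ioi (0:ℝ), FB ξ := Jfstar_eq hmeas hbdd
  have hJffin : Jf ≠ ∞ := by
    refine (lt_of_le_of_lt (lintegral_mono fun x => ?_) hJ.2).ne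
    rw [hKdef]
    simp only
    rw [← ENNReal.ofReal_mul (sq_nonneg _), Real.enorm_eq_ofReal_abs]
    exact ENNReal.ofReal_le_ofReal (le_abs_self _)
  have hkey : Jfs + ∫⁻ ξ in Set.Ioi (0:ℝ), G2 ξ ≤ Jf := by
    rw [hJfsFB, hJfFA, ← lintegral_add_left hFBm]
    exact setLIntegral_mono hFAm hgain
  have hJfsle : Jfs ≤ Jf := le_trans le_self_add hkey
  have hJfsfin : Jfs ≠ ∞ := (hJfsle.trans_lt hJffin.lt_top).ne
  have hG2le : ∫⁻ ξ in Set.Ioi (0:ℝ), G2 ξ ≤ Jf - Jfs :=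
    ENNReal.le_sub_of_add_le_left hJfsfin hkey
  -- DD = 2 dd on Ioi 0
  have hDD2dd : ∀ ξ ∈ Set.Ioi (0:ℝ), DD ξ = 2 * dd ξ := by
    intro ξ hξ
    have hAfin : volume {y : E2 | ξ < f y} ≠ ∞ := levelSet_finite hmeas hpos hJ hξ
    have hvolB : volume (Metric.ball (0:E2) (levelRadius f ξ)) = volume {y : E2 | ξ < f y} :=
      vol_ball_levelRadius hmeas hpos hJ hξ
    have h1 : volume (Metric.ball (0:E2) (levelRadius f ξ) ∩ {y : E2 | ξ < f y}) +
        volume (Metric.ball (0:E2) (levelRadius f ξ) \ {y : E2 | ξ < f y}) =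
        volume (Metric.ball (0:E2) (levelRadius f ξ)) :=
      measure_inter_add_diff (μ := volume) _ (levelSet_meas hmeas ξ)
    have h2 : volume ({y : E2 | ξ < f y} ∩ Metric.ball (0:E2) (levelRadius f ξ)) +
        volume ({y : E2 | ξ < f y} \ Metric.ball (0:E2) (levelRadius f ξ)) =
        volume {y : E2 | ξ < f y} :=
      measure_inter_add_diff (μ := volume) _ measurableSet_ball
    rw [hvolB, ← h2,
      Set.inter_comm (Metric.ball (0:E2) (levelRadius f ξ)) {y : E2 | ξ < f y}] at h1
    have hifin : volume ({y : E2 | ξ < f y} ∩ Metric.ball (0:E2) (levelRadius f ξ)) ≠ ∞ :=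
      ((measure_mono Set.inter_subset_left).trans_lt hAfin.lt_top).ne
    rw [ENNReal.add_right_inj hifin] at h1
    show ∫⁻ x : E2, Wk f (x, ξ) = 2 * dd ξ
    rw [Wk_slice hmeas ξ, h1, ← two_mul]
  -- DD vanishes above M
  have hDD0 : ∀ ξ : ℝ, M ≤ ξ → DD ξ = 0 := by
    intro ξ hξ
    have hA0 : volume {y : E2 | ξ < f y} = 0 := levelSet_null hbdd hξ
    have hB0 : Metric.ball (0:E2) (levelRadius f ξ) = ∅ := by
      rw [levelRadius_zero hbdd hξ]
      exact Metric.ball_zero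
    rw [hDDdef]
    simp only
    rw [Wk_slice hmeas ξ, hB0]
    simp only [Set.diff_empty, Set.empty_diff, measure_empty, add_zero, hA0]
  have hsplitIoi : ∫⁻ ξ in Set.Ioi (0:ℝ), DD ξ = ∫⁻ ξ in Set.Ioo (0:ℝ) M, DD ξ := by
    have hu : Set.Ioo (0:ℝ) M ∪ (Set.Ici M ∩ Set.Ioi 0) = Set.Ioi 0 := by
      ext ξ
      simp only [Set.mem_union, Set.mem_Ioo, Set.mem_inter_iff, Set.mem_Ici, Set.mem_Ioi]
      constructor
      · rintro (⟨h1, _⟩ | ⟨_, h2⟩)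
        · exact h1
        · exact h2
      · intro h
        rcases lt_or_ge ξ M with h2 | h2
        · exact Or.inl ⟨h, h2⟩
        · exact Or.inr ⟨h2, h⟩
    have hz : ∫⁻ ξ in Set.Ici M ∩ Set.Ioi (0:ℝ), DD ξ = 0 := by
      have hae : ∀ᵐ ξ ∂(volume.restrict (Set.Ici M ∩ Set.Ioi (0:ℝ))), DD ξ = 0 :=
        (ae_restrict_iff' (measurableSet_Ici.inter measurableSet_Ioi)).mpr
          (Filter.Eventually.of_forall fun ξ hξ => hDD0 ξ hξ.1)
      rw [lintegral_congr_ae hae, lintegral_zero]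
    rw [← hu, lintegral_union (measurableSet_Ici.inter measurableSet_Ioi)
      (Set.disjoint_left.mpr fun ξ h1 h2 => absurd h2.1 (not_le.mpr h1.2)), hz, add_zero]
  have hLle : L ≤ ∫⁻ ξ in Set.Ioo (0:ℝ) M, DD ξ :=
    (L_le hmeas hpos hbdd).trans_eq hsplitIoi
  -- Cauchy-Schwarz
  have hconj : Real.HolderConjugate 2 2 := ⟨by norm_num, by norm_num, by norm_num⟩
  have hCS := ENNReal.lintegral_mul_le_Lp_mul_Lq (volume.restrict (Set.Ioo (0:ℝ) M)) hconj
    hDDm.aemeasurable (aemeasurable_const (b := (1:ℝ≥0∞)))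
  have h1int : ∫⁻ _ in Set.Ioo (0:ℝ) M, (1:ℝ≥0∞)^(2:ℝ) = ENNReal.ofReal M := by
    simp only [ENNReal.one_rpow]
    rw [setLIntegral_one, Real.volume_Ioo, sub_zero]
  have hDDsq : ∀ ξ ∈ Set.Ioo (0:ℝ) M, DD ξ^(2:ℝ) = 4 * ENNReal.ofReal Real.pi * G2 ξ := by
    intro ξ hξ
    have hfin : dd ξ ≠ ∞ :=
      ((measure_mono Set.diff_subset).trans_lt
        (levelSet_finite hmeas hpos hJ hξ.1).lt_top).ne
    have hdd : dd ξ = ENNReal.ofReal ((dd ξ).toReal) := (ENNReal.ofReal_toReal hfin).symm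
    rw [show (2:ℝ) = ((2:ℕ):ℝ) by norm_num, ENNReal.rpow_natCast, hDD2dd ξ hξ.1]
    calc (2 * dd ξ)^(2:ℕ) = 4 * (dd ξ)^(2:ℕ) := by ring
      _ = 4 * ENNReal.ofReal ((dd ξ).toReal^2) := by
          congr 1
          rw [ENNReal.ofReal_pow ENNReal.toReal_nonneg, ENNReal.ofReal_toReal hfin]
      _ = 4 * (ENNReal.ofReal Real.pi * ENNReal.ofReal ((dd ξ).toReal^2 / Real.pi)) := by
          rw [← ENNReal.ofReal_mul hπ.le]
          congr 2
          field_simp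
      _ = 4 * ENNReal.ofReal Real.pi * G2 ξ := by
          rw [hG2def, mul_assoc]
  have hIntDDsq : ∫⁻ ξ in Set.Ioo (0:ℝ) M, DD ξ^(2:ℝ) ≤
      4 * ENNReal.ofReal Real.pi * (Jf - Jfs) := by
    calc ∫⁻ ξ in Set.Ioo (0:ℝ) M, DD ξ^(2:ℝ)
        = ∫⁻ ξ in Set.Ioo (0:ℝ) M, 4 * ENNReal.ofReal Real.pi * G2 ξ :=
          setLIntegral_congr_fun measurableSet_Ioo hDDsq
      _ = 4 * ENNReal.ofReal Real.pi * ∫⁻ ξ in Set.Ioo (0:ℝ) M, G2 ξ := by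
          rw [lintegral_const_mul' _ _ (by finiteness)]
      _ ≤ 4 * ENNReal.ofReal Real.pi * (Jf - Jfs) := by
          gcongr
          exact (lintegral_mono_set Set.Ioo_subset_Ioi_self).trans hG2le
  have hL2 : L^2 ≤ 4 * ENNReal.ofReal Real.pi * (Jf - Jfs) * ENNReal.ofReal M := by
    have hLle2 : L ≤ (4 * ENNReal.ofReal Real.pi * (Jf - Jfs))^(1/2:ℝ) *
        (ENNReal.ofReal M)^(1/2:ℝ) := by
      have hCS' : ∫⁻ ξ in Set.Ioo (0:ℝ) M, DD ξ ≤
          (∫⁻ ξ in Set.Ioo (0:ℝ) M, DD ξ^(2:ℝ))^(1/2:ℝ) *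
          (∫⁻ _ in Set.Ioo (0:ℝ) M, (1:ℝ≥0∞)^(2:ℝ))^(1/2:ℝ) := by
        refine le_trans (le_of_eq (lintegral_congr fun ξ => ?_)) hCS
        simp
      refine hLle.trans (hCS'.trans ?_)
      rw [h1int]
      exact mul_le_mul_left (ENNReal.rpow_le_rpow hIntDDsq (by norm_num)) _
    calc L^2 ≤ ((4 * ENNReal.ofReal Real.pi * (Jf - Jfs))^(1/2:ℝ) *
        (ENNReal.ofReal M)^(1/2:ℝ))^2 := by gcongr
      _ = 4 * ENNReal.ofReal Real.pi * (Jf - Jfs) * ENNReal.ofReal M := by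
          rw [← ENNReal.rpow_natCast _ 2, ENNReal.mul_rpow_of_nonneg _ _ (by norm_num),
            ← ENNReal.rpow_mul, ← ENNReal.rpow_mul]
          norm_num
  -- conversions to real integrals
  have heq1 : ∫ x : E2, |f x - rearrangement f x| = L.toReal := by
    rw [hLdef, integral_eq_lintegral_of_nonneg_ae (f := fun x => |f x - rearrangement f x|)
      (Filter.Eventually.of_forall fun x => abs_nonneg _)
      ((hmeas.sub (measurable_rearrangement)).abs).aestronglyMeasurable]
  have heq2 : ∫ x : E2, ‖x‖^2 * f x = Jf.toReal := by
    rw [integral_eq_lintegral_of_nonneg_ae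
      (Filter.Eventually.of_forall fun x => mul_nonneg (sq_nonneg _) (hpos x))
      ((measurable_norm.pow_const 2).mul hmeas).aestronglyMeasurable, hJfdef]
    congr 1
    refine lintegral_congr fun x => ?_
    simp only [hKdef]
    rw [ENNReal.ofReal_mul (sq_nonneg _)]
  have heq3 : ∫ x : E2, ‖x‖^2 * rearrangement f x = Jfs.toReal := by
    rw [integral_eq_lintegral_of_nonneg_ae
      (Filter.Eventually.of_forall fun x => mul_nonneg (sq_nonneg _) (rearrangement_nonneg x))
      ((measurable_norm.pow_const 2).mul (measurable_rearrangement)).aestronglyMeasurable,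
      hJfsdef]
    congr 1
    refine lintegral_congr fun x => ?_
    simp only [hKdef]
    rw [ENNReal.ofReal_mul (sq_nonneg _)]
  have hRHSfin : 4 * ENNReal.ofReal Real.pi * (Jf - Jfs) * ENNReal.ofReal M ≠ ∞ := by
    have h1 : Jf - Jfs ≠ ∞ := (tsub_le_self.trans_lt hJffin.lt_top).ne
    finiteness
  have hfinal : (L^2).toReal ≤
      (4 * ENNReal.ofReal Real.pi * (Jf - Jfs) * ENNReal.ofReal M).toReal :=
    ENNReal.toReal_mono hRHSfin hL2
  have hrhs : (4 * ENNReal.ofReal Real.pi * (Jf - Jfs) * ENNReal.ofReal M).toReal =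
      4 * Real.pi * M * (Jf.toReal - Jfs.toReal) := by
    rw [ENNReal.toReal_mul, ENNReal.toReal_mul, ENNReal.toReal_mul,
      ENNReal.toReal_ofReal hπ.le, ENNReal.toReal_ofReal hM0,
      ENNReal.toReal_sub_of_le hJfsle hJffin]
    norm_num
    ring
  rw [heq1, heq2, heq3, ← hrhs,
    show L.toReal^2 = (L^2).toReal from (ENNReal.toReal_pow _ _).symm]
  exact hfinal
end
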